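/- Let E be a finite type, let M₁ and M₂ be two matroids with ground set E, let w : E → ℝ be a weight function with w(e) ≥ 0 for all e, and let ≼ be a linear order on E such that e ≼ e' implies w(e) ≥ w(e') (elements are ordered by nonincreasing weight). Suppose S ⊆ E is the output of the greedy algorithm, characterized by: for every e ∈ E, e ∈ S if and only if the set {e' ∈ S : e' ≺ e} ∪ {e} is independent in both M₁ and M₂ (where ≺ is the strict order). Then for every set T ⊆ E that is independent in both M₁ and M₂, one has ∑_{e ∈ T} w(e) ≤ 2 · ∑_{e ∈ S} w(e); that is, the greedy algorithm achieves a 1/2-approximation for maximizing a nonnegative modular (additive) function over the intersection of two matroids. -/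

import Mathlib

open Finset

-- cardinality bound: an independent set inside the closure of an independent
-- finset has at most that many elements
lemma greedy_aux_card {E : Type*} [Fintype E] (M : Matroid E)
    (A J : Finset E) (hA : M.Indep ↑A) (hJ : M.Indep ↑J)
    (hsub : (J : Set E) ⊆ M.closure ↑A) : J.card ≤ A.card := by
  obtain ⟨K, hK, hJK⟩ := hJ.subset_isBasis_of_subset hsub (M.closure_subset_ground _)
  have h1 : (J : Set E).encard ≤ K.encard := Set.encard_mono hJK
  have h2 : K.encard = (A : Set E).encard := hK.encard_eq_encard hA.isBasis_closure
  rw [h2, Set.encard_coe_eq_coe_finsetCard, Set.encard_coe_eq_coe_finsetCard] at h1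
  exact_mod_cast h1

noncomputable def nxtw {E : Type*} [Fintype E] [LinearOrder E] (w : E → ℝ) (t : E) : ℝ :=
  if h : (univ.filter (fun j => t < j)).Nonempty then w ((univ.filter (fun j => t < j)).min' h)
  else 0

noncomputable def cw {E : Type*} [Fintype E] [LinearOrder E] (w : E → ℝ) (t : E) : ℝ :=
  w t - nxtw w t

lemma cw_nonneg {E : Type*} [Fintype E] [LinearOrder E] (w : E → ℝ)
    (hw : ∀ e, 0 ≤ w e) (hord : ∀ e e' : E, e ≤ e' → w e' ≤ w e) (t : E) :
    0 ≤ cw w t := by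
  unfold cw nxtw
  split_ifs with h
  · have hm := Finset.min'_mem _ h
    simp only [mem_filter, mem_univ, true_and] at hm
    have := hord t _ hm.le
    linarith
  · simpa using hw t

lemma tele {E : Type*} [Fintype E] [LinearOrder E] (w : E → ℝ) (t : E) :
    ∑ i ∈ univ.filter (fun i => t ≤ i), cw w i = w t := by
  induction t using ((IsWellFounded.wf : WellFounded ((· > ·) : E → E → Prop)).induction) with
  | _ t ih =>
    by_cases h : (univ.filter (fun j => t < j)).Nonempty
    · set s := (univ.filter (fun j => t < j)).min' h with hs
      have hts : t < s := by
        have := Finset.min'_mem _ h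
        simpa [← hs] using this
      have hset : univ.filter (fun i => t ≤ i) = insert t (univ.filter (fun i => s ≤ i)) := by
        ext e
        simp only [mem_filter, mem_univ, true_and, mem_insert]
        constructor
        · intro he
          rcases eq_or_lt_of_le he with h1 | h1
          · exact Or.inl h1.symm
          · exact Or.inr (Finset.min'_le _ _ (by simp [h1]))
        · rintro (rfl | he)
          · exact le_refl _
          · exact (hts.trans_le he).le
      have htn : t ∉ univ.filter (fun i => s ≤ i) := by
        simp only [mem_filter, mem_univ, true_and]
        exact not_le.2 hts
      rw [hset, Finset.sum_insert htn, ih s hts]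
      have : nxtw w t = w s := by unfold nxtw; rw [dif_pos h]
      unfold cw
      rw [this]; ring
    · have hset : univ.filter (fun i => t ≤ i) = {t} := by
        ext e
        simp only [mem_filter, mem_univ, true_and, mem_singleton]
        constructor
        · intro he
          rcases eq_or_lt_of_le he with h1 | h1
          · exact h1.symm
          · exact absurd ⟨e, by simp [h1]⟩ h
        · rintro rfl; exact le_refl _
      have : nxtw w t = 0 := by unfold nxtw; rw [dif_neg h]
      rw [hset, Finset.sum_singleton]
      unfold cw; rw [this]; ring

lemma sumid {E : Type*} [Fintype E] [LinearOrder E] (w : E → ℝ) (F : Finset E) :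
    ∑ t ∈ F, w t = ∑ i : E, cw w i * (F.filter (fun t => t ≤ i)).card := by
  calc ∑ t ∈ F, w t = ∑ t ∈ F, ∑ i ∈ univ.filter (fun i => t ≤ i), cw w i := by
        simp [tele]
    _ = ∑ t ∈ F, ∑ i : E, if t ≤ i then cw w i else 0 := by
        simp [Finset.sum_filter]
    _ = ∑ i : E, ∑ t ∈ F, if t ≤ i then cw w i else 0 := Finset.sum_comm
    _ = ∑ i : E, cw w i * (F.filter (fun t => t ≤ i)).card := by
        refine Finset.sum_congr rfl fun i _ => ?_
        rw [← Finset.sum_filter, Finset.sum_const, nsmul_eq_mul, mul_comm]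

/-- Greedy 1/2-approximation for maximizing a nonnegative modular function
over the intersection of two matroids: if elements are linearly ordered by
nonincreasing weight and `S` is the greedy output (an element is taken iff
adding it to the previously taken elements stays independent in both
matroids), then every common independent set `T` satisfies
`∑ e ∈ T, w e ≤ 2 ∑ e ∈ S, w e`. -/
theorem stmt_10 {E : Type*} [Fintype E] [LinearOrder E]
    (M₁ M₂ : Matroid E) (hE₁ : M₁.E = Set.univ) (hE₂ : M₂.E = Set.univ)
    (w : E → ℝ) (hw : ∀ e, 0 ≤ w e)
    (hord : ∀ e e' : E, e ≤ e' → w e' ≤ w e)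
    (S : Finset E)
    (hS : ∀ e : E, e ∈ S ↔
      (M₁.Indep ↑(insert e (S.filter (fun e' => e' < e))) ∧
       M₂.Indep ↑(insert e (S.filter (fun e' => e' < e)))))
    (T : Finset E) (hT₁ : M₁.Indep ↑T) (hT₂ : M₂.Indep ↑T) :
    ∑ e ∈ T, w e ≤ 2 * ∑ e ∈ S, w e := by
  classical
  -- S is independent in both matroids
  have hSindep : M₁.Indep ↑S ∧ M₂.Indep ↑S := by
    rcases S.eq_empty_or_nonempty with rfl | hne
    · simp [M₁.empty_indep, M₂.empty_indep]
    · set m := S.max' hne with hm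
      have hSeq : S = insert m (S.filter (fun e' => e' < m)) := by
        ext e
        simp only [mem_insert, mem_filter]
        constructor
        · intro he
          rcases eq_or_ne e m with rfl | hne'
          · exact Or.inl rfl
          · exact Or.inr ⟨he, lt_of_le_of_ne (S.le_max' e he) hne'⟩
        · rintro (rfl | ⟨he, _⟩)
          · exact S.max'_mem hne
          · exact he
      have hm' := (hS m).1 (S.max'_mem hne)
      exact ⟨hSeq ▸ hm'.1, hSeq ▸ hm'.2⟩
  -- key counting lemma
  have key : ∀ a : E, (T.filter (fun t => t ≤ a)).card ≤ 2 * (S.filter (fun t => t ≤ a)).card := by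
    intro a
    set A := S.filter (fun t => t ≤ a) with hA
    set T' := T.filter (fun t => t ≤ a) with hT'
    have hAidep₁ : M₁.Indep ↑A := hSindep.1.subset (by exact_mod_cast Finset.filter_subset _ S)
    have hAidep₂ : M₂.Indep ↑A := hSindep.2.subset (by exact_mod_cast Finset.filter_subset _ S)
    have hcover : ∀ t ∈ T', t ∈ M₁.closure ↑A ∨ t ∈ M₂.closure ↑A := by
      intro t ht
      simp only [hT', mem_filter] at ht
      obtain ⟨htT, hta⟩ := ht
      by_cases htS : t ∈ S
      · left
        apply M₁.subset_closure ↑A (by rw [hE₁]; exact Set.subset_univ _)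
        refine Finset.mem_coe.2 ?_
        simp only [hA, Finset.mem_filter]
        exact ⟨htS, hta⟩
      · have hdep := (hS t).not.1 htS
        rw [not_and_or] at hdep
        have hfsub : (S.filter (fun e' => e' < t) : Set E) ⊆ (A : Set E) := by
          intro e he
          rw [Finset.mem_coe, Finset.mem_filter] at he
          refine Finset.mem_coe.2 ?_
          rw [hA, Finset.mem_filter]
          exact ⟨he.1, (he.2.le.trans hta)⟩
        have htnf : t ∉ S.filter (fun e' => e' < t) := by simp
        rcases hdep with hd | hd
        · left
          have hind : M₁.Indep ↑(S.filter (fun e' => e' < t)) :=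
            hSindep.1.subset (by exact_mod_cast Finset.filter_subset _ S)
          have : t ∈ M₁.closure ↑(S.filter (fun e' => e' < t)) := by
            by_contra hcl
            apply hd
            rw [Finset.coe_insert]
            rw [hind.insert_indep_iff_of_notMem (by simp)]
            exact ⟨by rw [hE₁]; trivial, hcl⟩
          exact M₁.closure_subset_closure hfsub this
        · right
          have hind : M₂.Indep ↑(S.filter (fun e' => e' < t)) :=
            hSindep.2.subset (by exact_mod_cast Finset.filter_subset _ S)
          have : t ∈ M₂.closure ↑(S.filter (fun e' => e' < t)) := by
            by_contra hcl
            apply hd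
            rw [Finset.coe_insert]
            rw [hind.insert_indep_iff_of_notMem (by simp)]
            exact ⟨by rw [hE₂]; trivial, hcl⟩
          exact M₂.closure_subset_closure hfsub this
    -- split T' into two parts
    set T₁ := T'.filter (fun t => t ∈ M₁.closure ↑A) with hT₁'
    set T₂ := T'.filter (fun t => t ∈ M₂.closure ↑A) with hT₂'
    have hsplit : T' ⊆ T₁ ∪ T₂ := by
      intro t ht
      rcases hcover t ht with h | h
      · exact Finset.mem_union_left _ (Finset.mem_filter.2 ⟨ht, h⟩)
      · exact Finset.mem_union_right _ (Finset.mem_filter.2 ⟨ht, h⟩)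
    have hc1 : T₁.card ≤ A.card := by
      apply greedy_aux_card M₁ A T₁ hAidep₁
      · refine hT₁.subset (Finset.coe_subset.2 ?_)
        exact (Finset.filter_subset _ _).trans (Finset.filter_subset _ _)
      · intro x hx
        rw [Finset.mem_coe, hT₁', Finset.mem_filter] at hx
        exact hx.2
    have hc2 : T₂.card ≤ A.card := by
      apply greedy_aux_card M₂ A T₂ hAidep₂
      · refine hT₂.subset (Finset.coe_subset.2 ?_)
        exact (Finset.filter_subset _ _).trans (Finset.filter_subset _ _)
      · intro x hx
        rw [Finset.mem_coe, hT₂', Finset.mem_filter] at hx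
        exact hx.2
    calc T'.card ≤ (T₁ ∪ T₂).card := Finset.card_le_card hsplit
      _ ≤ T₁.card + T₂.card := Finset.card_union_le _ _
      _ ≤ A.card + A.card := add_le_add hc1 hc2
      _ = 2 * A.card := (two_mul _).symm
  -- combine via the weight decomposition
  rw [sumid w T, sumid w S, Finset.mul_sum]
  apply Finset.sum_le_sum
  intro i _
  have hci := cw_nonneg w hw hord i
  have hk := key i
  calc cw w i * (T.filter (fun t => t ≤ i)).card
      ≤ cw w i * (2 * (S.filter (fun t => t ≤ i)).card : ℕ) := by
        apply mul_le_mul_of_nonneg_left _ hci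
        exact_mod_cast hk
    _ = 2 * (cw w i * (S.filter (fun t => t ≤ i)).card) := by
        push_cast; ring
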